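/- Let f ≥ 1 be an integer and let χ be a Dirichlet character modulo f. Then for every s ∈ ℂ with Re s > 1, the Dirichlet L-function satisfies L(s, χ) = (1/Γ(s)) · ∫_0^1 (−log z)^{s−1} · (Σ_{a=1}^{f} χ(a) z^a) · ((1 − z^f) · z)^{−1} dz. -/

import Mathlib

open MeasureTheory Set Real


lemma aux_intOn (s : ℂ) (hs : 0 < s.re) {r : ℝ} (hr : 0 < r) :
    IntegrableOn (fun t : ℝ => (t : ℂ) ^ (s - 1) * Complex.exp (-(r * t))) (Set.Ioi 0) := by
  constructor
  · apply ContinuousOn.aestronglyMeasurable _ measurableSet_Ioi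
    apply ContinuousOn.mul
    · exact fun t ht =>
        (Complex.continuousAt_ofReal_cpow_const t (s-1) (Or.inr (ne_of_gt ht))).continuousWithinAt
    · fun_prop
  · have hbig : IntegrableOn (fun t : ℝ => t ^ (s.re - 1) * Real.exp (-(r * t))) (Set.Ioi 0) := by
      have := integrableOn_rpow_mul_exp_neg_mul_rpow (s := s.re - 1) (p := 1) (b := r)
        (by linarith) one_pos hr
      simpa using this
    apply HasFiniteIntegral.congr' hbig.2
    filter_upwards [ae_restrict_mem measurableSet_Ioi] with t ht
    rw [norm_mul, norm_mul,
      Complex.norm_cpow_eq_rpow_re_of_pos ht, Complex.sub_re, Complex.one_re]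
    congr 1
    · rw [Real.norm_eq_abs, abs_of_pos (Real.rpow_pos_of_pos ht _)]
    · rw [Real.norm_eq_abs, abs_of_pos (Real.exp_pos _), Complex.norm_exp]
      norm_num

lemma exp_neg_image : (fun t : ℝ => Real.exp (-t)) '' Set.Ioi 0 = Set.Ioo 0 1 := by
  ext x
  constructor
  · rintro ⟨t, ht, rfl⟩
    exact ⟨Real.exp_pos _, Real.exp_lt_one_iff.mpr (by simpa using ht)⟩
  · rintro ⟨hx0, hx1⟩
    exact ⟨-Real.log x, by simpa using Real.log_neg hx0 hx1, by simp [Real.exp_log hx0]⟩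

lemma exp_neg_deriv (t : ℝ) :
    HasDerivWithinAt (fun t : ℝ => Real.exp (-t)) (-Real.exp (-t)) (Set.Ioi 0) t := by
  have h := (Real.hasDerivAt_exp (-t)).comp t (hasDerivAt_neg t)
  rw [mul_neg_one] at h
  exact h.hasDerivWithinAt

lemma exp_neg_inj : Set.InjOn (fun t : ℝ => Real.exp (-t)) (Set.Ioi 0) :=
  (Real.exp_injective.comp neg_injective).injOn

lemma subst_eq (s : ℂ) (n : ℕ) (t : ℝ) :
    |(-Real.exp (-t))| • (((-Real.log (Real.exp (-t)) : ℝ) : ℂ) ^ (s - 1) *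
        ((Real.exp (-t) : ℝ) : ℂ) ^ n)
      = (t : ℂ) ^ (s - 1) * Complex.exp (-((((n : ℝ) + 1) : ℝ) * t)) := by
  rw [abs_neg, abs_of_pos (Real.exp_pos _), Real.log_exp, neg_neg, Complex.real_smul,
    Complex.ofReal_exp, ← Complex.exp_nat_mul, mul_left_comm, ← Complex.exp_add]
  congr 1
  push_cast
  ring

lemma mellin_pow_complex {s : ℂ} (hs : 0 < s.re) (n : ℕ) :
    ∫ z in Set.Ioo (0:ℝ) 1, ((-Real.log z : ℝ) : ℂ) ^ (s - 1) * (z : ℂ) ^ n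
      = (1 / ((n : ℂ) + 1)) ^ s * Complex.Gamma s := by
  rw [← exp_neg_image, integral_image_eq_integral_abs_deriv_smul measurableSet_Ioi
    (fun t _ => exp_neg_deriv t) exp_neg_inj]
  simp only [subst_eq s n]
  rw [Complex.integral_cpow_mul_exp_neg_mul_Ioi hs (by positivity : (0:ℝ) < (n:ℝ) + 1)]
  norm_num

lemma mellin_pow_integrable {s : ℂ} (hs : 0 < s.re) (n : ℕ) :
    IntegrableOn (fun z : ℝ => ((-Real.log z : ℝ) : ℂ) ^ (s - 1) * (z : ℂ) ^ n)
      (Set.Ioo 0 1) := by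
  have := aux_intOn s hs (r := (n:ℝ)+1) (by positivity)
  rw [← exp_neg_image, integrableOn_image_iff_integrableOn_abs_deriv_smul measurableSet_Ioi
    (fun t _ => exp_neg_deriv t) exp_neg_inj]
  simp only [subst_eq s n]
  exact this

lemma mellin_pow_real {σ : ℝ} (hs : 0 < σ) (n : ℕ) :
    ∫ z in Set.Ioo (0:ℝ) 1, (-Real.log z) ^ (σ - 1) * z ^ n
      = (1 / ((n : ℝ) + 1)) ^ σ * Real.Gamma σ := by
  rw [← exp_neg_image, integral_image_eq_integral_abs_deriv_smul measurableSet_Ioi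
    (fun t _ => exp_neg_deriv t) exp_neg_inj]
  have : ∀ t : ℝ, |(-Real.exp (-t))| • ((-Real.log (Real.exp (-t))) ^ (σ - 1) *
      (Real.exp (-t)) ^ n) = t ^ (σ - 1) * Real.exp (-(((n : ℝ) + 1) * t)) := by
    intro t
    rw [abs_neg, abs_of_pos (Real.exp_pos _), Real.log_exp, neg_neg, smul_eq_mul,
      ← Real.exp_nat_mul, mul_comm, mul_assoc, ← Real.exp_add]
    congr 1
    ring
  simp only [this]
  rw [Real.integral_rpow_mul_exp_neg_mul_Ioi hs (by positivity : (0:ℝ) < (n:ℝ) + 1)]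
open MeasureTheory Set Real Finset

lemma chi_summable {f : ℕ} [NeZero f] (χ : DirichletCharacter ℂ f) {w : ℂ} (hw : ‖w‖ < 1) :
    Summable (fun n : ℕ => χ ((n + 1 : ℕ) : ZMod f) * w ^ (n + 1)) := by
  apply Summable.of_norm
  apply Summable.of_nonneg_of_le (fun n => norm_nonneg _) (fun n => ?_)
    (summable_geometric_of_lt_one (norm_nonneg w) hw)
  calc ‖χ ((n + 1 : ℕ) : ZMod f) * w ^ (n + 1)‖
      ≤ 1 * ‖w ^ (n + 1)‖ := by
        rw [norm_mul]
        exact mul_le_mul_of_nonneg_right (χ.norm_le_one _) (norm_nonneg _)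
    _ = ‖w‖ ^ (n + 1) := by rw [one_mul, norm_pow]
    _ ≤ ‖w‖ ^ n := pow_le_pow_of_le_one (norm_nonneg w) hw.le (Nat.le_succ n)

lemma series_eq (f : ℕ) (hf : 1 ≤ f) [NeZero f] (χ : DirichletCharacter ℂ f)
    {z : ℝ} (hz : z ∈ Set.Ioo (0:ℝ) 1) :
    (∑ a ∈ Finset.Icc 1 f, χ ((a : ℕ) : ZMod f) * (z : ℂ) ^ a) * ((1 - (z : ℂ) ^ f) * z)⁻¹
      = ∑' n : ℕ, χ ((n + 1 : ℕ) : ZMod f) * (z : ℂ) ^ n := by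
  set w : ℂ := (z : ℂ) with hwdef
  have hnw : ‖w‖ < 1 := by
    rw [hwdef, Complex.norm_real, Real.norm_eq_abs, abs_of_pos hz.1]
    exact hz.2
  have hw0 : w ≠ 0 := by
    simp only [hwdef, ne_eq, Complex.ofReal_eq_zero]
    exact ne_of_gt hz.1
  have hsum := chi_summable χ hnw
  set S := ∑' n : ℕ, χ ((n + 1 : ℕ) : ZMod f) * w ^ (n + 1) with hS
  have h1 := Summable.sum_add_tsum_nat_add f hsum
  have h2 : (∑' i : ℕ, χ ((i + f + 1 : ℕ) : ZMod f) * w ^ (i + f + 1)) = w ^ f * S := by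
    rw [hS, ← tsum_mul_left]
    apply tsum_congr
    intro i
    have hcast : ((i + f + 1 : ℕ) : ZMod f) = ((i + 1 : ℕ) : ZMod f) := by
      push_cast [ZMod.natCast_self]
      ring
    rw [hcast]
    ring
  have h3 : (∑ a ∈ Finset.Icc 1 f, χ ((a : ℕ) : ZMod f) * w ^ a)
      = ∑ i ∈ Finset.range f, χ ((i + 1 : ℕ) : ZMod f) * w ^ (i + 1) := by
    rw [← Finset.Ico_add_one_right_eq_Icc, Finset.sum_Ico_eq_sum_range]
    simp [add_comm]
  have h4 : (∑ a ∈ Finset.Icc 1 f, χ ((a : ℕ) : ZMod f) * w ^ a) = (1 - w ^ f) * S := by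
    have : (∑ i ∈ Finset.range f, χ ((i + 1 : ℕ) : ZMod f) * w ^ (i + 1)) + w ^ f * S = S := by
      rw [← h2]
      exact h1
    rw [h3]
    linear_combination this
  have hne : (1 : ℂ) - w ^ f ≠ 0 := by
    intro h
    have : ‖w ^ f‖ < 1 := by
      rw [norm_pow]
      exact pow_lt_one₀ (norm_nonneg w) hnw (by omega)
    rw [sub_eq_zero] at h
    rw [← h] at this
    simp at this
  rw [h4, mul_inv, show (1 - w ^ f) * S * ((1 - w ^ f)⁻¹ * w⁻¹)
      = ((1 - w ^ f) * (1 - w ^ f)⁻¹) * (S * w⁻¹) from by ring, mul_inv_cancel₀ hne, one_mul,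
    hS, ← tsum_mul_right]
  apply tsum_congr
  intro n
  rw [pow_succ, mul_assoc, mul_assoc, mul_inv_cancel₀ hw0, mul_one]

theorem stmt_8 (f : ℕ) (hf : 1 ≤ f) [NeZero f] (χ : DirichletCharacter ℂ f)
    (s : ℂ) (hs : 1 < s.re) :
    DirichletCharacter.LFunction χ s =
      (1 / Complex.Gamma s) *
        ∫ z in Set.Ioo (0:ℝ) 1,
          ((-Real.log z : ℝ) : ℂ) ^ (s - 1) *
            (∑ a ∈ Finset.Icc 1 f, χ (a : ZMod f) * (z : ℂ) ^ a) *
            ((1 - (z : ℂ) ^ f) * z)⁻¹ := by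
  have h0 : 0 < s.re := by linarith
  have hΓ : Complex.Gamma s ≠ 0 := by
    apply Complex.Gamma_ne_zero
    intro m h
    rw [h] at hs
    simp only [Complex.neg_re, Complex.natCast_re] at hs
    have : (0:ℝ) ≤ m := Nat.cast_nonneg m
    linarith
  set F : ℕ → ℝ → ℂ := fun n z =>
    χ (((n + 1 : ℕ) : ZMod f)) * (((-Real.log z : ℝ) : ℂ) ^ (s - 1) * (z : ℂ) ^ n) with hF
  have hFint : ∀ n, Integrable (F n) (volume.restrict (Set.Ioo (0:ℝ) 1)) := fun n =>
    (mellin_pow_integrable h0 n).const_mul _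
  -- value of the norm integrals
  have hnorm : ∀ n : ℕ, ∫ z in Set.Ioo (0:ℝ) 1, ‖F n z‖
      = ‖χ (((n + 1 : ℕ) : ZMod f))‖ * ((1 / ((n : ℝ) + 1)) ^ s.re * Real.Gamma s.re) := by
    intro n
    rw [← mellin_pow_real h0 n, ← integral_const_mul _ _]
    apply setIntegral_congr_fun measurableSet_Ioo
    intro z hz
    have hlog : 0 < -Real.log z := by simpa using Real.log_neg hz.1 hz.2
    rw [hF]
    simp only [norm_mul,
      Complex.norm_cpow_eq_rpow_re_of_pos hlog, Complex.sub_re, Complex.one_re]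
    congr 2
    rw [norm_pow, Complex.norm_real, Real.norm_eq_abs, abs_of_pos hz.1]
  have hsummable : Summable (fun n : ℕ => ∫ z in Set.Ioo (0:ℝ) 1, ‖F n z‖) := by
    have hbase : Summable (fun n : ℕ => (1 / ((n : ℝ) + 1)) ^ s.re * Real.Gamma s.re) := by
      apply Summable.mul_right
      have h1 : Summable (fun n : ℕ => ((((n + 1 : ℕ) : ℝ)) ^ s.re)⁻¹) :=
        (summable_nat_add_iff 1).mpr (Real.summable_nat_rpow_inv.mpr hs)
      apply h1.congr
      intro n
      rw [one_div, ← Real.inv_rpow (by positivity)]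
      push_cast
      ring_nf
    apply Summable.of_nonneg_of_le
      (fun n => integral_nonneg (fun z => norm_nonneg _)) (fun n => ?_) hbase
    rw [hnorm n]
    apply mul_le_of_le_one_left _ (χ.norm_le_one _)
    have := Real.Gamma_pos_of_pos h0
    positivity
  -- the integral equals the sum of the χ(n+1) Mellin integrals
  have hswap : (∫ z in Set.Ioo (0:ℝ) 1,
        ((-Real.log z : ℝ) : ℂ) ^ (s - 1) *
          (∑ a ∈ Finset.Icc 1 f, χ (a : ZMod f) * (z : ℂ) ^ a) *
          ((1 - (z : ℂ) ^ f) * z)⁻¹)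
      = ∑' n : ℕ, ∫ z in Set.Ioo (0:ℝ) 1, F n z := by
    rw [integral_tsum_of_summable_integral_norm hFint hsummable]
    apply setIntegral_congr_fun measurableSet_Ioo
    intro z hz
    beta_reduce
    rw [mul_assoc, series_eq f hf χ hz, ← tsum_mul_left]
    exact tsum_congr fun n => by rw [hF]; ring
  have hval : ∀ n : ℕ, (∫ z in Set.Ioo (0:ℝ) 1, F n z)
      = χ (((n + 1 : ℕ) : ZMod f)) * ((1 / ((n : ℂ) + 1)) ^ s * Complex.Gamma s) := by
    intro n
    rw [hF]
    simp only
    rw [integral_const_mul _ _, mellin_pow_complex h0 n]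
  -- identify the L-function with the series
  rw [DirichletCharacter.LFunction_eq_LSeries χ hs, LSeries]
  have hLsum : LSeriesSummable (fun n => χ (n : ZMod f)) s :=
    DirichletCharacter.LSeriesSummable_of_one_lt_re χ hs
  rw [Summable.tsum_eq_zero_add hLsum, LSeries.term_zero, zero_add]
  rw [hswap, tsum_congr hval]
  have hre : ∀ n : ℕ, χ (((n + 1 : ℕ) : ZMod f)) * ((1 / ((n : ℂ) + 1)) ^ s * Complex.Gamma s)
      = (χ (((n + 1 : ℕ) : ZMod f)) * (1 / ((n : ℂ) + 1)) ^ s) * Complex.Gamma s :=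
    fun n => by ring
  rw [tsum_congr hre, tsum_mul_right, one_div, mul_comm _ (Complex.Gamma s), ← mul_assoc,
    inv_mul_cancel₀ hΓ, one_mul]
  apply tsum_congr
  intro n
  rw [LSeries.term_of_ne_zero (Nat.succ_ne_zero n), div_eq_mul_inv]
  congr 1
  have hcast : ((n : ℂ) + 1) = ((n + 1 : ℕ) : ℂ) := by push_cast; ring
  rw [hcast, one_div, Complex.inv_cpow]
  rw [Complex.natCast_arg]
  exact Real.pi_ne_zero.symm
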